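/- Let T be a p×p real matrix every eigenvalue of which, viewed over ℂ, has strictly negative real part; let e be the all-ones vector in ℝ^p, t := −T e, and π ∈ ℝ^p. Then for every n ∈ ℕ with n ≥ 1, ∫₀^∞ zⁿ · (π·(exp(zT) t)) dz = n! · π·((−T)⁻ⁿ e). (The n-th moment of a phase-type distribution PH(π, T) equals n! π (−T)^{−n} e.) -/

import Mathlib

open Matrix MeasureTheory NormedSpace Filter Asymptotics Set

section Aux

attribute [local instance] Matrix.linftyOpNormedAddCommGroup Matrix.linftyOpNormedRing
  Matrix.linftyOpNormedAlgebra
attribute [-instance] instTopologicalSpaceMatrix Matrix.instUniformSpace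

variable {p : ℕ}

lemma contExp (T : Matrix (Fin p) (Fin p) ℝ) : Continuous fun z : ℝ => exp (z • T) :=
  continuous_iff_continuousAt.mpr fun z => (hasDerivAt_exp_smul_const T z).continuousAt

lemma exp_mulVec_eigen (Tc : Matrix (Fin p) (Fin p) ℂ) {μ : ℂ} {w : Fin p → ℂ}
    (hw : Tc *ᵥ w = μ • w) : exp Tc *ᵥ w = Complex.exp μ • w := by
  have hpow : ∀ n : ℕ, Tc ^ n *ᵥ w = μ ^ n • w := by
    intro n
    induction n with
    | zero => simp
    | succ n ih =>
      rw [pow_succ, ← Matrix.mulVec_mulVec, hw, Matrix.mulVec_smul, ih, smul_smul, pow_succ]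
      ring_nf
  have hsum := expSeries_summable' (𝕂 := ℂ) Tc
  let L : Matrix (Fin p) (Fin p) ℂ →ₗ[ℂ] (Fin p → ℂ) :=
    { toFun := fun M => M *ᵥ w
      map_add' := fun A B => Matrix.add_mulVec A B w
      map_smul' := fun c A => Matrix.smul_mulVec c A w }
  let Lc := LinearMap.toContinuousLinearMap L
  have h0 : exp Tc *ᵥ w = Lc (exp Tc) := rfl
  rw [h0, exp_eq_tsum ℂ, Lc.map_tsum hsum]
  have h1 : ∀ n : ℕ, Lc ((n.factorial⁻¹ : ℂ) • Tc ^ n) = ((n.factorial⁻¹ : ℂ) * μ ^ n) • w := by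
    intro n
    have h2 : Lc ((n.factorial⁻¹ : ℂ) • Tc ^ n) = ((n.factorial⁻¹ : ℂ) • Tc ^ n) *ᵥ w := rfl
    rw [h2, Matrix.smul_mulVec, hpow, smul_smul]
  simp_rw [h1]
  have hsum2 : Summable fun n : ℕ => (n.factorial⁻¹ : ℂ) * μ ^ n := by
    simpa [smul_eq_mul] using expSeries_summable' (𝕂 := ℂ) μ
  rw [hsum2.tsum_smul_const]
  congr 1
  rw [Complex.exp_eq_exp_ℂ, exp_eq_tsum ℂ]
  simp [smul_eq_mul]

lemma norm_exp_le' (hp : 0 < p) (x : Matrix (Fin p) (Fin p) ℂ) :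
    ‖exp x‖ ≤ Real.exp ‖x‖ := by
  haveI : Nonempty (Fin p) := Fin.pos_iff_nonempty.mp hp
  rw [exp_eq_tsum ℂ]
  refine (norm_tsum_le_tsum_norm (norm_expSeries_summable' (𝕂 := ℂ) x)).trans ?_
  have hexp : Real.exp ‖x‖ = ∑' n : ℕ, (n.factorial⁻¹ : ℝ) • ‖x‖ ^ n := by
    rw [Real.exp_eq_exp_ℝ, exp_eq_tsum ℝ]
  rw [hexp]
  refine Summable.tsum_le_tsum ?_ (norm_expSeries_summable' (𝕂 := ℂ) x) ?_
  · intro n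
    rw [norm_smul, smul_eq_mul]
    gcongr
    · simp
    · exact norm_pow_le x n
  · simpa [smul_eq_mul] using norm_expSeries_summable' (𝕂 := ℝ) ‖x‖

lemma isUnit_det_aux (T : Matrix (Fin p) (Fin p) ℝ)
    (hT : ∀ μ ∈ spectrum ℂ (T.map (algebraMap ℝ ℂ)), μ.re < 0) :
    IsUnit T.det := by
  have h0 : (0 : ℂ) ∉ spectrum ℂ (T.map (algebraMap ℝ ℂ)) := fun h => by
    simpa using hT 0 h
  rw [spectrum.notMem_iff] at h0
  simp only [map_zero, zero_sub] at h0
  have hTc : IsUnit (T.map (algebraMap ℝ ℂ)) := by simpa using h0.neg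
  rw [Matrix.isUnit_iff_isUnit_det] at hTc
  have hmap : T.map (algebraMap ℝ ℂ) = (algebraMap ℝ ℂ).mapMatrix T := rfl
  rw [hmap, ← RingHom.map_det] at hTc
  have : T.det ≠ 0 := by
    intro h
    rw [h] at hTc
    simpa using hTc
  exact isUnit_iff_ne_zero.mpr this

lemma spec_exp (Tc : Matrix (Fin p) (Fin p) ℂ) {ν : ℂ}
    (hν : ν ∈ spectrum ℂ (exp Tc)) :
    ∃ μ ∈ spectrum ℂ Tc, ν = Complex.exp μ := by
  let Φ := Matrix.toLinAlgEquiv' (R := ℂ) (n := Fin p)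
  rw [← AlgEquiv.spectrum_eq Φ, ← Module.End.hasEigenvalue_iff_mem_spectrum] at hν
  set E := Module.End.eigenspace (Φ (exp Tc)) ν with hE
  have hEbot : E ≠ ⊥ := hν
  have hcomm : exp Tc * Tc = Tc * exp Tc := ((Commute.refl Tc).exp_right).symm
  have hinv : ∀ x ∈ E, Φ Tc x ∈ E := by
    intro x hx
    rw [hE, Module.End.mem_eigenspace_iff] at hx ⊢
    have : Φ (exp Tc) (Φ Tc x) = Φ Tc (Φ (exp Tc) x) := by
      rw [← Module.End.mul_apply, ← Module.End.mul_apply, ← _root_.map_mul, ← _root_.map_mul, hcomm]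
    rw [this, hx, LinearMap.map_smul]
  haveI : Nontrivial E := Submodule.nontrivial_iff_ne_bot.mpr hEbot
  obtain ⟨μ, hμ⟩ := Module.End.exists_eigenvalue ((Φ Tc).restrict hinv)
  obtain ⟨w', hw'⟩ := hμ.exists_hasEigenvector
  refine ⟨μ, ?_, ?_⟩
  · -- μ ∈ spectrum ℂ Tc
    have hTw : Φ Tc (w' : Fin p → ℂ) = μ • (w' : Fin p → ℂ) := by
      have := congrArg (Submodule.subtype E) hw'.apply_eq_smul
      simpa [LinearMap.restrict_apply] using this
    have hev : Module.End.HasEigenvalue (Φ Tc) μ :=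
      Module.End.hasEigenvalue_of_hasEigenvector
        ⟨Module.End.mem_eigenspace_iff.mpr hTw, by simpa using hw'.right⟩
    rw [← AlgEquiv.spectrum_eq Φ, ← Module.End.hasEigenvalue_iff_mem_spectrum]
    exact hev
  · -- ν = exp μ
    have hTw : Tc *ᵥ (w' : Fin p → ℂ) = μ • (w' : Fin p → ℂ) := by
      have := congrArg (Submodule.subtype E) hw'.apply_eq_smul
      simpa [LinearMap.restrict_apply, Φ, Matrix.toLinAlgEquiv'_apply] using this
    have h1 : exp Tc *ᵥ (w' : Fin p → ℂ) = Complex.exp μ • (w' : Fin p → ℂ) :=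
      exp_mulVec_eigen Tc hTw
    have h2 : exp Tc *ᵥ (w' : Fin p → ℂ) = ν • (w' : Fin p → ℂ) := by
      have := Module.End.mem_eigenspace_iff.mp w'.2
      simpa [Φ, Matrix.toLinAlgEquiv'_apply] using this
    have hw0 : (w' : Fin p → ℂ) ≠ 0 := by simpa using hw'.right
    have h3 : (ν - Complex.exp μ) • (w' : Fin p → ℂ) = 0 := by
      rw [sub_smul, ← h1, ← h2, sub_self]
    rcases smul_eq_zero.mp h3 with h | h
    · exact (sub_eq_zero.mp h)
    · exact absurd h hw0


lemma norm_map_ofReal (M : Matrix (Fin p) (Fin p) ℝ) :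
    ‖M.map (algebraMap ℝ ℂ)‖ = ‖M‖ := by
  rw [← coe_nnnorm, ← coe_nnnorm]
  congr 1
  rw [Matrix.linfty_opNNNorm_def, Matrix.linfty_opNNNorm_def]
  simp [Matrix.map_apply]

lemma map_exp_real (T : Matrix (Fin p) (Fin p) ℝ) (z : ℝ) :
    exp (z • T.map (algebraMap ℝ ℂ)) = (exp (z • T)).map (algebraMap ℝ ℂ) := by
  have hf : Continuous fun M : Matrix (Fin p) (Fin p) ℝ => M.map (algebraMap ℝ ℂ) :=
    continuous_id.matrix_map Complex.continuous_ofReal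
  have h1 := map_exp ((algebraMap ℝ ℂ).mapMatrix) hf (z • T)
  rw [RingHom.mapMatrix_apply, RingHom.mapMatrix_apply] at h1
  have h2 : (z • T : Matrix (Fin p) (Fin p) ℝ).map (algebraMap ℝ ℂ) =
      z • T.map (algebraMap ℝ ℂ) := by
    ext i j
    simp [Matrix.map_apply, Complex.real_smul]
  rw [h2] at h1
  exact h1.symm

lemma decay (hp : 0 < p) (T : Matrix (Fin p) (Fin p) ℝ)
    (hT : ∀ μ ∈ spectrum ℂ (T.map (algebraMap ℝ ℂ)), μ.re < 0) :
    ∃ ε : ℝ, 0 < ε ∧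
      (fun z : ℝ => ‖exp (z • T)‖) =O[atTop] fun z => Real.exp (-ε * z) := by
  haveI : Nonempty (Fin p) := Fin.pos_iff_nonempty.mp hp
  set Tc := T.map (algebraMap ℝ ℂ) with hTcdef
  have hne : (spectrum ℂ Tc).Nonempty := spectrum.nonempty Tc
  have hcomp : IsCompact (spectrum ℂ Tc) := spectrum.isCompact Tc
  obtain ⟨μ₀, hμ₀mem, hμ₀max⟩ :=
    hcomp.exists_isMaxOn hne Complex.continuous_re.continuousOn
  rw [isMaxOn_iff] at hμ₀max
  set δ : ℝ := -μ₀.re with hδdef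
  have hδpos : 0 < δ := by
    have := hT μ₀ hμ₀mem
    simp only [hδdef]
    linarith
  set r : NNReal := Real.toNNReal (Real.exp (-(δ / 2))) with hrdef
  have hrcoe : (r : ℝ) = Real.exp (-(δ / 2)) := Real.coe_toNNReal _ (Real.exp_pos _).le
  have hrlt : ∀ ν ∈ spectrum ℂ (exp Tc), ‖ν‖₊ < r := by
    intro ν hν
    obtain ⟨μ, hμ, rfl⟩ := spec_exp Tc hν
    rw [← NNReal.coe_lt_coe, coe_nnnorm, hrcoe, Complex.norm_exp]
    apply Real.exp_lt_exp.mpr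
    have h1 : μ.re ≤ -δ := by
      have := hμ₀max μ hμ
      simp only [hδdef]
      linarith
    linarith
  have hrad := spectrum.spectralRadius_lt_of_forall_lt (a := exp Tc) hrlt
  have htend := spectrum.pow_nnnorm_pow_one_div_tendsto_nhds_spectralRadius (exp Tc)
  have hev : ∀ᶠ n : ℕ in atTop, (‖(exp Tc) ^ n‖₊ : ENNReal) ^ (1 / (n : ℝ)) < (r : ENNReal) :=
    htend.eventually_lt_const hrad
  obtain ⟨N, hN⟩ := eventually_atTop.mp hev
  have hpow : ∀ n : ℕ, N ≤ n → 1 ≤ n → ‖(exp Tc) ^ n‖ ≤ (r : ℝ) ^ n := by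
    intro n hn h1n
    have hn0 : (n : ℝ) ≠ 0 := Nat.cast_ne_zero.mpr (by omega)
    have h2 := ENNReal.rpow_le_rpow (hN n hn).le (Nat.cast_nonneg n)
    rw [← ENNReal.rpow_mul, one_div_mul_cancel hn0, ENNReal.rpow_one,
      ENNReal.rpow_natCast, ← ENNReal.coe_pow, ENNReal.coe_le_coe] at h2
    calc ‖(exp Tc) ^ n‖ = ((‖(exp Tc) ^ n‖₊ : ℝ)) := (coe_nnnorm _).symm
      _ ≤ ((r ^ n : NNReal) : ℝ) := NNReal.coe_le_coe.mpr h2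
      _ = (r : ℝ) ^ n := by push_cast; ring
  refine ⟨δ / 2, half_pos hδpos, ?_⟩
  rw [isBigO_iff]
  refine ⟨Real.exp ‖Tc‖ * Real.exp (δ / 2), ?_⟩
  filter_upwards [eventually_ge_atTop ((N : ℝ) + 1), eventually_ge_atTop (1 : ℝ)] with z hz hz1
  have hz0 : (0 : ℝ) ≤ z := by linarith
  set n : ℕ := ⌊z⌋₊ with hndef
  have hnN : N ≤ n := by
    have h := Nat.le_floor (α := ℝ) (n := N + 1) (by push_cast; linarith)
    omega
  have hn1 : 1 ≤ n := Nat.le_floor (by exact_mod_cast hz1)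
  have hfl : (n : ℝ) ≤ z := Nat.floor_le hz0
  have hfl2 : z < (n : ℝ) + 1 := Nat.lt_floor_add_one z
  set s : ℝ := z - n with hsdef
  have hs0 : 0 ≤ s := by simp only [hsdef]; linarith
  have hs1 : s ≤ 1 := by simp only [hsdef]; linarith
  -- split exponential
  have hsplit : exp (z • Tc) = (exp Tc) ^ n * exp (s • Tc) := by
    have hzns : z • Tc = (n : ℝ) • Tc + s • Tc := by
      rw [← add_smul]
      congr 1
      simp only [hsdef]; ring
    rw [hzns, NormedSpace.exp_add_of_commute (((Commute.refl Tc).smul_left _).smul_right _)]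
    congr 1
    rw [Nat.cast_smul_eq_nsmul ℝ n Tc, NormedSpace.exp_nsmul]
  -- norms
  have heq : ‖exp (z • T)‖ = ‖exp (z • Tc)‖ := by
    rw [map_exp_real T z, norm_map_ofReal]
  have hstep : ‖exp (z • T)‖ ≤ (r : ℝ) ^ n * Real.exp ‖Tc‖ := by
    rw [heq, hsplit]
    calc ‖(exp Tc) ^ n * exp (s • Tc)‖ ≤ ‖(exp Tc) ^ n‖ * ‖exp (s • Tc)‖ :=
          norm_mul_le _ _
      _ ≤ (r : ℝ) ^ n * Real.exp ‖Tc‖ := by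
          apply mul_le_mul (hpow n hnN hn1) ?_ (norm_nonneg _) (by positivity)
          refine (norm_exp_le' hp _).trans ?_
          apply Real.exp_le_exp.mpr
          rw [norm_smul, Real.norm_eq_abs, abs_of_nonneg hs0]
          nlinarith [norm_nonneg Tc]
  have hrn : (r : ℝ) ^ n ≤ Real.exp (δ / 2) * Real.exp (-(δ / 2) * z) := by
    rw [hrcoe, ← Real.exp_nat_mul, ← Real.exp_add]
    apply Real.exp_le_exp.mpr
    have : z - 1 ≤ (n : ℝ) := by linarith
    nlinarith
  rw [Real.norm_eq_abs, abs_of_nonneg (norm_nonneg _), Real.norm_eq_abs,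
    Real.abs_exp]
  calc ‖exp (z • T)‖ ≤ (r : ℝ) ^ n * Real.exp ‖Tc‖ := hstep
    _ ≤ (Real.exp (δ / 2) * Real.exp (-(δ / 2) * z)) * Real.exp ‖Tc‖ := by
        apply mul_le_mul_of_nonneg_right hrn (Real.exp_pos _).le
    _ = Real.exp ‖Tc‖ * Real.exp (δ / 2) * Real.exp (-(δ / 2) * z) := by ring


lemma decayPow (hp : 0 < p) (T : Matrix (Fin p) (Fin p) ℝ)
    (hT : ∀ μ ∈ spectrum ℂ (T.map (algebraMap ℝ ℂ)), μ.re < 0) :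
    ∃ ε : ℝ, 0 < ε ∧ ∀ n : ℕ,
      (fun z : ℝ => z ^ n * ‖exp (z • T)‖) =O[atTop] fun z => Real.exp (-(ε / 2) * z) := by
  obtain ⟨ε, hε, hO⟩ := decay hp T hT
  refine ⟨ε, hε, fun n => ?_⟩
  have h1 : (fun z : ℝ => z ^ n) =O[atTop] fun z => Real.exp (ε / 2 * z) :=
    (isLittleO_pow_exp_pos_mul_atTop n (half_pos hε)).isBigO
  have h2 := h1.mul hO
  have h3 : (fun z : ℝ => Real.exp (ε / 2 * z) * Real.exp (-ε * z)) =
      fun z : ℝ => Real.exp (-(ε / 2) * z) := by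
    funext z
    rw [← Real.exp_add]
    congr 1
    ring
  exact h3 ▸ h2

lemma integrableAux (hp : 0 < p) (T : Matrix (Fin p) (Fin p) ℝ)
    (hT : ∀ μ ∈ spectrum ℂ (T.map (algebraMap ℝ ℂ)), μ.re < 0) (n : ℕ) :
    IntegrableOn (fun z : ℝ => z ^ n • exp (z • T)) (Ioi 0) := by
  obtain ⟨ε, hε, hO⟩ := decayPow hp T hT
  have hcontg : Continuous fun z : ℝ => z ^ n * ‖exp (z • T)‖ :=
    (continuous_pow n).mul (contExp T).norm
  have hg : IntegrableOn (fun z : ℝ => z ^ n * ‖exp (z • T)‖) (Ioi 0) :=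
    integrable_of_isBigO_exp_neg (half_pos hε) hcontg.continuousOn (hO n)
  refine Integrable.mono' hg (((continuous_pow n).smul (contExp T)).aestronglyMeasurable) ?_
  filter_upwards [ae_restrict_mem measurableSet_Ioi] with z hz
  rw [norm_smul, Real.norm_eq_abs, abs_pow, abs_of_pos hz]

lemma tendstoAux (hp : 0 < p) (T : Matrix (Fin p) (Fin p) ℝ)
    (hT : ∀ μ ∈ spectrum ℂ (T.map (algebraMap ℝ ℂ)), μ.re < 0) (n : ℕ)
    (M : Matrix (Fin p) (Fin p) ℝ) :
    Tendsto (fun z : ℝ => z ^ n • (exp (z • T) * M)) atTop (nhds 0) := by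
  obtain ⟨ε, hε, hO⟩ := decayPow hp T hT
  have h1 : Tendsto (fun z : ℝ => Real.exp (-(ε / 2) * z)) atTop (nhds 0) := by
    apply Real.tendsto_exp_atBot.comp
    exact Tendsto.const_mul_atTop_of_neg (neg_lt_zero.mpr (half_pos hε)) tendsto_id
  have hg : Tendsto (fun z : ℝ => z ^ n * ‖exp (z • T)‖ * ‖M‖) atTop (nhds 0) := by
    simpa using ((hO n).trans_tendsto h1).mul_const ‖M‖
  refine squeeze_zero_norm' ?_ hg
  filter_upwards [eventually_ge_atTop (0 : ℝ)] with z hz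
  calc ‖z ^ n • (exp (z • T) * M)‖ = |z| ^ n * ‖exp (z • T) * M‖ := by
        rw [norm_smul, Real.norm_eq_abs, abs_pow]
    _ ≤ |z| ^ n * (‖exp (z • T)‖ * ‖M‖) := by
        gcongr
        exact norm_mul_le _ _
    _ = z ^ n * ‖exp (z • T)‖ * ‖M‖ := by rw [abs_of_nonneg hz]; ring

lemma Jintegral (hp : 0 < p) (T : Matrix (Fin p) (Fin p) ℝ)
    (hT : ∀ μ ∈ spectrum ℂ (T.map (algebraMap ℝ ℂ)), μ.re < 0) :
    ∀ n : ℕ, ∫ z in Ioi (0 : ℝ), z ^ n • exp (z • T) =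
      (n.factorial : ℝ) • ((-T)⁻¹) ^ (n + 1) := by
  have hdetT : IsUnit T.det := isUnit_det_aux T hT
  set B := T⁻¹ with hBdef
  have hTB : T * B = 1 := Matrix.mul_nonsing_inv T hdetT
  have hC : (-T)⁻¹ = -B := by
    apply Matrix.inv_eq_right_inv
    rw [Matrix.mul_neg, Matrix.neg_mul, neg_neg, hTB]
  have hbase : ∫ z in Ioi (0 : ℝ), z ^ 0 • exp (z • T) = 0 - exp ((0 : ℝ) • T) * B := by
    apply integral_Ioi_of_hasDerivAt_of_tendsto' (f := fun z : ℝ => exp (z • T) * B)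
    · intro x _
      have h := (hasDerivAt_exp_smul_const (𝕂 := ℝ) T x).mul_const B
      exact h.congr_deriv (by rw [pow_zero, one_smul, mul_assoc, hTB, mul_one])
    · exact integrableAux hp T hT 0
    · exact (tendstoAux hp T hT 0 B).congr (by simp)
  have hJ0 : ∫ z in Ioi (0 : ℝ), z ^ 0 • exp (z • T) = -B := by
    rw [hbase, zero_smul, exp_zero, one_mul, zero_sub]
  intro n
  induction n with
  | zero => simpa [hC] using hJ0
  | succ n ih =>
    -- step : J (n+1) = -((n+1:ℝ)) • (J n * B)
    let Lc : Matrix (Fin p) (Fin p) ℝ →L[ℝ] Matrix (Fin p) (Fin p) ℝ :=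
      LinearMap.toContinuousLinearMap
        { toFun := fun M => ((n + 1 : ℝ)) • (M * B)
          map_add' := by
            intro A C
            show (n + 1 : ℝ) • ((A + C) * B) = (n + 1 : ℝ) • (A * B) + (n + 1 : ℝ) • (C * B)
            rw [add_mul, smul_add]
          map_smul' := by
            intro c A
            show (n + 1 : ℝ) • ((c • A) * B) = c • ((n + 1 : ℝ) • (A * B))
            rw [Matrix.smul_mul, smul_comm] }
    have hstep : ∫ z in Ioi (0 : ℝ),
        (z ^ (n + 1) • exp (z • T) + Lc (z ^ n • exp (z • T))) =
        0 - (0 : ℝ) ^ (n + 1) • (exp ((0 : ℝ) • T) * B) := by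
      apply integral_Ioi_of_hasDerivAt_of_tendsto'
        (f := fun z : ℝ => z ^ (n + 1) • (exp (z • T) * B))
      · intro x _
        have h := (hasDerivAt_pow (n + 1) x).smul
          ((hasDerivAt_exp_smul_const (𝕂 := ℝ) T x).mul_const B)
        have e1 : exp (x • T) * T * B = exp (x • T) := by rw [mul_assoc, hTB, mul_one]
        rw [e1, Nat.add_sub_cancel] at h
        have e3 : Lc (x ^ n • exp (x • T)) =
            ((↑(n + 1) : ℝ) * x ^ n) • (exp (x • T) * B) := by
          show (n + 1 : ℝ) • ((x ^ n • exp (x • T)) * B) = _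
          rw [Matrix.smul_mul, smul_smul]
          norm_num
        rw [e3]
        exact h
      · exact (integrableAux hp T hT (n + 1)).add (Lc.integrable_comp (integrableAux hp T hT n))
      · exact tendstoAux hp T hT (n + 1) B
    rw [integral_add (integrableAux hp T hT (n + 1)) (Lc.integrable_comp (integrableAux hp T hT n)),
      ContinuousLinearMap.integral_comp_comm Lc (integrableAux hp T hT n), ih] at hstep
    have h0 : ((0 : ℝ) ^ (n + 1) : ℝ) = 0 := by simp
    rw [h0, zero_smul, zero_sub, neg_zero] at hstep
    have hJ1 : ∫ z in Ioi (0 : ℝ), z ^ (n + 1) • exp (z • T) =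
        -Lc ((n.factorial : ℝ) • (-T)⁻¹ ^ (n + 1)) :=
      eq_neg_of_add_eq_zero_left hstep
    have hB' : B = -(-T)⁻¹ := by rw [hC, neg_neg]
    rw [hJ1]
    show -((n + 1 : ℝ) • (((n.factorial : ℝ) • (-T)⁻¹ ^ (n + 1)) * B)) = _
    rw [hB', Matrix.smul_mul, Matrix.mul_neg, ← pow_succ, smul_neg, smul_neg, neg_neg, smul_smul]
    congr 1
    push_cast [Nat.factorial_succ]
    ring

lemma scalarized (hp : 0 < p) (T : Matrix (Fin p) (Fin p) ℝ)
    (hT : ∀ μ ∈ spectrum ℂ (T.map (algebraMap ℝ ℂ)), μ.re < 0)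
    (t π : Fin p → ℝ) (n : ℕ) :
    ∫ z in Ioi (0 : ℝ), z ^ n * (π ⬝ᵥ (exp (z • T) *ᵥ t)) =
      π ⬝ᵥ ((∫ z in Ioi (0 : ℝ), z ^ n • exp (z • T)) *ᵥ t) := by
  let Lc : Matrix (Fin p) (Fin p) ℝ →L[ℝ] ℝ :=
    LinearMap.toContinuousLinearMap
      { toFun := fun M => π ⬝ᵥ (M *ᵥ t)
        map_add' := by
          intro A C
          show π ⬝ᵥ ((A + C) *ᵥ t) = π ⬝ᵥ (A *ᵥ t) + π ⬝ᵥ (C *ᵥ t)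
          rw [Matrix.add_mulVec, dotProduct_add]
        map_smul' := by
          intro c A
          show π ⬝ᵥ ((c • A) *ᵥ t) = c • (π ⬝ᵥ (A *ᵥ t))
          rw [Matrix.smul_mulVec, dotProduct_smul] }
  have h1 : ∀ z : ℝ, z ^ n * (π ⬝ᵥ (exp (z • T) *ᵥ t)) = Lc (z ^ n • exp (z • T)) := by
    intro z
    show _ = π ⬝ᵥ ((z ^ n • exp (z • T)) *ᵥ t)
    rw [Matrix.smul_mulVec, dotProduct_smul, smul_eq_mul]
  simp_rw [h1]
  rw [ContinuousLinearMap.integral_comp_comm Lc (integrableAux hp T hT n)]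
  rfl

end Aux

/-- The `n`-th moment of a phase-type distribution `PH(π, T)` equals `n! π (-T)^{-n} e`. -/
theorem phaseType_moment {p : ℕ} (T : Matrix (Fin p) (Fin p) ℝ)
    (hT : ∀ μ ∈ spectrum ℂ (T.map (algebraMap ℝ ℂ)), μ.re < 0)
    (e : Fin p → ℝ) (he : e = fun _ => 1) (t : Fin p → ℝ) (ht : t = (-T) *ᵥ e)
    (π : Fin p → ℝ) :
    ∀ n : ℕ, 1 ≤ n →
      ∫ z in Set.Ioi (0 : ℝ), z ^ n * (π ⬝ᵥ (NormedSpace.exp (z • T) *ᵥ t)) =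
        (n.factorial : ℝ) * (π ⬝ᵥ (((-T)⁻¹) ^ n *ᵥ e)) := by
  intro n hn
  rcases Nat.eq_zero_or_pos p with hp | hp
  · subst hp
    simp [dotProduct]
  · have hdet : IsUnit (-T).det := by
      rw [Matrix.det_neg]
      exact (isUnit_one.neg.pow _).mul (isUnit_det_aux T hT)
    refine (scalarized hp T hT t π n).trans ?_
    rw [Jintegral hp T hT n, ht]
    rw [Matrix.smul_mulVec, Matrix.mulVec_mulVec, dotProduct_smul,
      pow_succ, mul_assoc, Matrix.nonsing_inv_mul (-T) hdet, mul_one, smul_eq_mul]
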